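/- Let [R | S] be a full-row-rank matrix over the reals with R square and invertible, and let N = R^{-1} S. Then for any invertible matrix R' whose columns are a subset of the columns of [R | S], the matrix obtained analogously from the basis R' is related to N by a sequence of pivot operations; in particular, pivoting N on a nonzero entry in row r, column s corresponds to exchanging the columns r and s between the basic part R and the nonbasic part S. -/

import Mathlib

/-- The pivot of a matrix `N` on a (nonzero) entry in row `r`, column `s`: the basis-exchange
(Tucker) pivot. -/
noncomputable def pivotAt {m n : Type*} [DecidableEq m] [DecidableEq n]
    (N : Matrix m n ℝ) (r : m) (s : n) : Matrix m n ℝ :=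
  Matrix.of fun i j =>
    if i = r then (if j = s then 1 / N r s else N r j / N r s)
    else (if j = s then - N i s / N r s else N i j - N i s * N r j / N r s)

/-- One pivot step or a simultaneous permutation of rows and columns. -/
def PivotPermStep {m n : Type*} [DecidableEq m] [DecidableEq n]
    (X Y : Matrix m n ℝ) : Prop :=
  (∃ (r : m) (s : n), X r s ≠ 0 ∧ Y = pivotAt X r s) ∨
  (∃ (σ : Equiv.Perm m) (τ : Equiv.Perm n), Y = X.submatrix σ τ)

private lemma sum_if_eq {m : Type*} [Fintype m] [DecidableEq m] (r : m) (a : ℝ) (b : m → ℝ) :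
    ∑ k, (if k = r then a else b k) = a - b r + ∑ k, b k := by
  have h : ∀ k, (if k = r then a else b k) = (if k = r then a - b r else 0) + b k := by
    intro k; by_cases h : k = r <;> simp [h]
  rw [Finset.sum_congr rfl fun k _ => h k, Finset.sum_add_distrib, Finset.sum_ite_eq']
  simp

lemma pivot_exchange {m n : Type*} [Fintype m] [DecidableEq m] [Fintype n] [DecidableEq n]
    (R : Matrix m m ℝ) (S : Matrix m n ℝ) (hR : IsUnit R.det) (r : m) (s : n)
    (h : (R⁻¹ * S) r s ≠ 0) :
    IsUnit (R.updateCol r (fun i => S i s)).det ∧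
    (R.updateCol r (fun i => S i s))⁻¹ * (S.updateCol s (fun i => R i r)) =
      pivotAt (R⁻¹ * S) r s := by
  set N : Matrix m n ℝ := R⁻¹ * S with hN
  set α : ℝ := N r s with hα
  have hα0 : α ≠ 0 := h
  have hRN : R * N = S := by
    rw [hN, ← Matrix.mul_assoc, Matrix.mul_nonsing_inv _ hR, Matrix.one_mul]
  set F : Matrix m m ℝ := Matrix.of
    (fun k j => if j = r then (if k = r then α⁻¹ else -(N k s) * α⁻¹) else (1 : Matrix m m ℝ) k j)
    with hF
  have hRS : ∀ i, ∑ k, R i k * N k s = S i s := by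
    intro i; rw [← Matrix.mul_apply, hRN]
  have hRF : (R.updateCol r (fun i => S i s)) * F = R := by
    ext i j
    rw [Matrix.mul_apply]
    by_cases hj : j = r
    · have hsplit : ∀ k, (R.updateCol r (fun i => S i s)) i k * F k j =
          (if k = r then S i s * α⁻¹ else -α⁻¹ * (R i k * N k s)) := by
        intro k
        by_cases hk : k = r <;>
          simp [hF, hk, hj, Matrix.updateCol_apply, Matrix.one_apply] <;> ring
      rw [Finset.sum_congr rfl fun k _ => hsplit k, sum_if_eq, ← Finset.mul_sum, hRS, hj]
      field_simp
      rw [hα]; ring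
    · have hsplit : ∀ k, (R.updateCol r (fun i => S i s)) i k * F k j =
          (if k = r then 0 else R i k * (1 : Matrix m m ℝ) k j) := by
        intro k
        by_cases hk : k = r
        · simp [hF, hk, hj, Matrix.updateCol_apply,
            Matrix.one_apply_ne (fun hrj => hj hrj.symm)]
        · simp [hF, hk, hj, Matrix.updateCol_apply]
      rw [Finset.sum_congr rfl fun k _ => hsplit k, sum_if_eq, ← Matrix.mul_apply,
        Matrix.mul_one]
      simp [Matrix.one_apply_ne (fun hrj : r = j => hj hrj.symm)]
  have hone : (R.updateCol r (fun i => S i s)) * (F * R⁻¹) = 1 := by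
    rw [← Matrix.mul_assoc, hRF, Matrix.mul_nonsing_inv _ hR]
  refine ⟨Matrix.isUnit_det_of_right_inverse hone, ?_⟩
  rw [Matrix.inv_eq_right_inv hone]
  set M : Matrix m n ℝ :=
    Matrix.of (fun i j => if j = s then (if i = r then (1:ℝ) else 0) else N i j) with hM'
  have hM : R⁻¹ * (S.updateCol s (fun i => R i r)) = M := by
    ext i j
    rw [Matrix.mul_apply]
    by_cases hj : j = s
    · have : ∀ k, R⁻¹ i k * (S.updateCol s (fun i => R i r)) k j = R⁻¹ i k * R k r := by
        intro k; rw [Matrix.updateCol_apply, if_pos hj]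
      rw [Finset.sum_congr rfl fun k _ => this k, ← Matrix.mul_apply,
        Matrix.nonsing_inv_mul _ hR]
      simp [hM', hj, Matrix.one_apply]
    · have : ∀ k, R⁻¹ i k * (S.updateCol s (fun i => R i r)) k j = R⁻¹ i k * S k j := by
        intro k; rw [Matrix.updateCol_apply, if_neg hj]
      rw [Finset.sum_congr rfl fun k _ => this k, ← Matrix.mul_apply]
      simp [hM', hj, hN]
  rw [Matrix.mul_assoc, hM]
  ext i j
  rw [Matrix.mul_apply]
  by_cases hi : i = r
  · have hsplit : ∀ k, F i k * M k j = (if k = r then α⁻¹ * M r j else 0) := by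
      intro k
      by_cases hk : k = r
      · simp [hF, hk, hi]
      · simp [hF, hk, hi, Matrix.one_apply_ne (show r ≠ k from fun h2 => hk h2.symm)]
    rw [Finset.sum_congr rfl fun k _ => hsplit k, sum_if_eq]
    by_cases hj : j = s <;>
      simp [pivotAt, hM', hi, hj, div_eq_mul_inv, mul_comm, ← hα]
  · have hsplit : ∀ k, F i k * M k j =
        (if k = r then -(N i s) * α⁻¹ * M r j else (1 : Matrix m m ℝ) i k * M k j) := by
      intro k
      by_cases hk : k = r <;> simp [hF, hk, hi]
    rw [Finset.sum_congr rfl fun k _ => hsplit k, sum_if_eq, ← Matrix.mul_apply,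
      Matrix.one_mul, Matrix.one_apply_ne (show i ≠ r from hi)]
    by_cases hj : j = s <;>
      · simp [pivotAt, hM', hi, hj, div_eq_mul_inv, ← hα]; try ring

open Matrix in
lemma key {m n : Type*} [Fintype m] [DecidableEq m] [Fintype n] [DecidableEq n] :
    ∀ (c : ℕ) (R : Matrix m m ℝ) (S : Matrix m n ℝ), IsUnit R.det →
    ∀ (f : m → m ⊕ n) (g : n → m ⊕ n), Function.Injective f → Function.Injective g →
    (∀ k l, f k ≠ g l) →
    (Finset.univ.filter (fun k => (f k).isRight)).card = c →
    ∀ (R' : Matrix m m ℝ) (S' : Matrix m n ℝ),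
      R' = Matrix.of (fun i k => Matrix.fromCols R S i (f k)) →
      S' = Matrix.of (fun i l => Matrix.fromCols R S i (g l)) →
      IsUnit R'.det →
      Relation.ReflTransGen PivotPermStep (R⁻¹ * S) (R'⁻¹ * S') := by
  intro c
  induction c with
  | zero =>
    intro R S hR f g hf hg hdisj hc R' S' hR' hS' hR'u
    -- every f k is a left injection
    have hfl : ∀ k, ∃ a, f k = Sum.inl a := by
      intro k
      have : ¬ (f k).isRight := by
        intro h
        have : k ∈ Finset.univ.filter (fun k => (f k).isRight) := by simp [h]
        rw [Finset.card_eq_zero.mp hc] at this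
        exact absurd this (Finset.notMem_empty k)
      cases hfk : f k with
      | inl a => exact ⟨a, rfl⟩
      | inr b => rw [hfk] at this; simp at this
    choose σ hσ using hfl
    have hσinj : Function.Injective σ := fun a b hab => hf (by rw [hσ, hσ, hab])
    have hσbij : Function.Bijective σ := Finite.injective_iff_bijective.mp hσinj
    set eσ := Equiv.ofBijective σ hσbij with heσ
    have hgl : ∀ l, ∃ b, g l = Sum.inr b := by
      intro l
      cases hgl : g l with
      | inl a =>
        obtain ⟨k, hk⟩ := hσbij.2 a
        exact absurd (by rw [hσ k, hk, hgl]) (hdisj k l)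
      | inr b => exact ⟨b, rfl⟩
    choose τ hτ using hgl
    have hτinj : Function.Injective τ := fun a b hab => hg (by rw [hτ, hτ, hab])
    set eτ := Equiv.ofBijective τ (Finite.injective_iff_bijective.mp hτinj) with heτ
    have hR'e : R' = R.submatrix (Equiv.refl m) eσ := by
      subst hR'; ext i k
      simp [hσ k, Matrix.fromCols_apply_inl, heσ, Equiv.ofBijective]
    have hS'e : S' = S.submatrix (Equiv.refl m) ⇑eτ := by
      subst hS'; ext i l
      simp [hτ l, Matrix.fromCols_apply_inr, heτ, Equiv.ofBijective]
    have : R'⁻¹ * S' = (R⁻¹ * S).submatrix eσ eτ := by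
      rw [hR'e, hS'e, Matrix.inv_submatrix_equiv]
      have := Matrix.submatrix_mul_equiv R⁻¹ S (⇑eσ) (Equiv.refl m) (⇑eτ)
      simpa using this
    exact Relation.ReflTransGen.single (Or.inr ⟨eσ, eτ, this⟩)
  | succ c ih =>
    intro R S hR f g hf hg hdisj hc R' S' hR' hS' hR'u
    -- find a column of R' coming from S
    have hne : (Finset.univ.filter (fun k => (f k).isRight)).Nonempty := by
      rw [← Finset.card_pos, hc]; omega
    obtain ⟨k0, hk0⟩ := hne
    have hk0r : (f k0).isRight := (Finset.mem_filter.mp hk0).2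
    obtain ⟨s, hs⟩ : ∃ s, f k0 = Sum.inr s := by
      cases hfk : f k0 with
      | inl a => rw [hfk] at hk0r; simp at hk0r
      | inr b => exact ⟨b, rfl⟩
    set N := R⁻¹ * S with hN
    -- find a pivot row
    have hex : ∃ r, (∀ k, f k ≠ Sum.inl r) ∧ N r s ≠ 0 := by
      by_contra hcon
      push_neg at hcon
      -- build a kernel vector of R'
      set w : m ⊕ n → ℝ :=
        Sum.elim (fun a => N a s) (fun b => if b = s then -1 else 0) with hw
      have hvzero : R' *ᵥ (fun k => w (f k)) = 0 := by
        funext i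
        have hRN : R * N = S := by
          rw [hN, ← Matrix.mul_assoc, Matrix.mul_nonsing_inv _ hR, Matrix.one_mul]
        rw [Matrix.mulVec, Pi.zero_apply]
        have h1 : (fun k => R' i k * w (f k)) = fun k =>
            Matrix.fromCols R S i (f k) * w (f k) := by
          funext k; rw [hR']; rfl
        show (Finset.univ.sum fun k => R' i k * w (f k)) = 0
        rw [h1]
        have h2 : (∑ k : m, Matrix.fromCols R S i (f k) * w (f k))
            = ∑ x ∈ Finset.univ.image f, Matrix.fromCols R S i x * w x :=
          (Finset.sum_image (f := fun x => Matrix.fromCols R S i x * w x) (g := f)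
            (fun x _ y _ h => hf h)).symm
        rw [h2, Finset.sum_subset (Finset.subset_univ _)]
        · rw [Fintype.sum_sum_type]
          simp only [Matrix.fromCols_apply_inl, Matrix.fromCols_apply_inr, hw,
            Sum.elim_inl, Sum.elim_inr]
          have h3 : ∑ a, R i a * N a s = S i s := by rw [← Matrix.mul_apply, hRN]
          have h4 : ∀ b, (S i b * if b = s then (-1:ℝ) else 0)
              = (if b = s then -(S i s) else 0) := by
            intro b; by_cases hb : b = s <;> simp [hb]
          rw [h3, Finset.sum_congr rfl (fun b _ => h4 b)]
          simp
        · intro x _ hx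
          cases x with
          | inl a =>
            have : ∀ k, f k ≠ Sum.inl a := by
              intro k hk; exact hx (Finset.mem_image.mpr ⟨k, Finset.mem_univ k, hk⟩)
            simp [hw, hcon a this]
          | inr b =>
            have hb : b ≠ s := by
              intro hb; subst hb
              exact hx (Finset.mem_image.mpr ⟨k0, Finset.mem_univ k0, hs⟩)
            simp [hw, hb]
      have hv0 : (fun k => w (f k)) = 0 := by
        have h2 := congrArg (fun u => R'⁻¹ *ᵥ u) hvzero
        simpa [Matrix.mulVec_mulVec, Matrix.nonsing_inv_mul _ hR'u] using h2
      have h3 := congrFun hv0 k0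
      rw [hs] at h3
      simp [hw] at h3
    obtain ⟨r, hrf, hNrs⟩ := hex
    obtain ⟨hR2u, hpiv⟩ := pivot_exchange R S hR r s hNrs
    set R₂ := R.updateCol r (fun i => S i s) with hR₂
    set S₂ := S.updateCol s (fun i => R i r) with hS₂
    set e : m ⊕ n ≃ m ⊕ n := Equiv.swap (Sum.inl r) (Sum.inr s) with he
    have hTe : ∀ i x, Matrix.fromCols R₂ S₂ i (e x) = Matrix.fromCols R S i x := by
      intro i x
      rcases x with a | b
      · by_cases ha : a = r
        · subst ha
          rw [he, Equiv.swap_apply_left]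
          simp [hR₂, hS₂, Matrix.updateCol_apply]
        · rw [he, Equiv.swap_apply_of_ne_of_ne (by simp [ha]) (by simp)]
          simp [hR₂, Matrix.updateCol_apply, ha]
      · by_cases hb : b = s
        · subst hb
          rw [he, Equiv.swap_apply_right]
          simp [hR₂, hS₂, Matrix.updateCol_apply]
        · rw [he, Equiv.swap_apply_of_ne_of_ne (by simp) (by simp [hb])]
          simp [hS₂, Matrix.updateCol_apply, hb]
    have hcard : (Finset.univ.filter (fun k => ((e ∘ f) k).isRight)).card = c := by
      have hfe : Finset.univ.filter (fun k => ((e ∘ f) k).isRight)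
          = (Finset.univ.filter (fun k => (f k).isRight)).erase k0 := by
        ext k
        simp only [Finset.mem_filter, Finset.mem_erase, Finset.mem_univ, true_and,
          Function.comp_apply]
        constructor
        · intro hkr
          constructor
          · intro hk
            rw [hk, hs, he, Equiv.swap_apply_right] at hkr
            simp at hkr
          · cases hfk : f k with
            | inl a =>
              have ha : Sum.inl a ≠ (Sum.inl r : m ⊕ n) := by
                simp only [ne_eq, Sum.inl.injEq]
                exact fun h => hrf k (h ▸ hfk)
              rw [hfk, he, Equiv.swap_apply_of_ne_of_ne ha (by simp)] at hkr
              simp at hkr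
            | inr b => simp
        · rintro ⟨hk, hkr⟩
          cases hfk : f k with
          | inl a => rw [hfk] at hkr; simp at hkr
          | inr b =>
            have hb : Sum.inr b ≠ (Sum.inr s : m ⊕ n) := by
              simp only [ne_eq, Sum.inr.injEq]
              intro h; exact hk (hf (hfk.trans (h ▸ hs.symm)))
            rw [he, Equiv.swap_apply_of_ne_of_ne (by simp) hb]
            simp
      rw [hfe, Finset.card_erase_of_mem hk0, hc]
      omega
    have step : PivotPermStep (R⁻¹ * S) (R₂⁻¹ * S₂) :=
      Or.inl ⟨r, s, hNrs, hpiv⟩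
    refine Relation.ReflTransGen.head step ?_
    refine ih R₂ S₂ hR2u (e ∘ f) (e ∘ g) (e.injective.comp hf) (e.injective.comp hg)
      (fun k l h => hdisj k l (e.injective h)) hcard R' S' ?_ ?_ hR'u
    · rw [hR']; ext i k; exact (hTe i (f k)).symm
    · rw [hS']; ext i l; exact (hTe i (g l)).symm

/-- Let `[R | S]` have full row rank with `R` square invertible and `N = R⁻¹ * S`.
Then (i) for any invertible matrix `R'` whose columns are a subset of the columns of `[R | S]`
(the remaining columns forming `S'`), the representation matrix `R'⁻¹ * S'` is related to `N`
by a sequence of pivot operations (and row/column permutations); and (ii) in particular,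
pivoting `N` on a nonzero entry in row `r`, column `s` corresponds exactly to exchanging
column `r` of `R` with column `s` of `S`. -/
theorem basis_exchange_is_pivot {m n : Type*} [Fintype m] [DecidableEq m]
    [Fintype n] [DecidableEq n]
    (R : Matrix m m ℝ) (S : Matrix m n ℝ) (hR : IsUnit R.det)
    (N : Matrix m n ℝ) (hN : N = R⁻¹ * S) :
    (∀ (f : m → m ⊕ n) (g : n → m ⊕ n), Function.Injective f → Function.Injective g →
      (∀ k l, f k ≠ g l) →
      ∀ (R' : Matrix m m ℝ) (S' : Matrix m n ℝ),
        R' = Matrix.of (fun i k => Matrix.fromCols R S i (f k)) →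
        S' = Matrix.of (fun i l => Matrix.fromCols R S i (g l)) →
        IsUnit R'.det →
        Relation.ReflTransGen PivotPermStep N (R'⁻¹ * S')) ∧
    (∀ (r : m) (s : n), N r s ≠ 0 →
      IsUnit (R.updateCol r (fun i => S i s)).det ∧
      (R.updateCol r (fun i => S i s))⁻¹ * (S.updateCol s (fun i => R i r)) =
        pivotAt N r s) := by
  constructor
  · intro f g hf hg hdisj R' S' hR' hS' hR'u
    rw [hN]
    exact key _ R S hR f g hf hg hdisj rfl R' S' hR' hS' hR'u
  · intro r s hrs
    rw [hN] at hrs ⊢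
    exact pivot_exchange R S hR r s hrs
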